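/- arXiv:2601.06269 — 9 statements merged into one kernel-verified Lean document; each statement's English description precedes it below -/
import Mathlib

section
/- Let (X,α,*) be a probabilistic metric space and define φ_{λ,x}(y) = inf{γ ∈ [0,∞) : α(x,y,γ) > 1−λ} (with inf ∅ = ∞). If ε,λ ∈ (0,1] satisfy (1−λ)*(1−λ) > 1−ε, then for all x,y,z ∈ X: φ_{ε,x}(z) ≤ φ_{λ,x}(y) + φ_{λ,y}(z), where addition is in [0,∞]. -/
open scoped ENNReal

noncomputable section

/-- A continuous t-norm `*` on the unit interval `[0,1] ⊆ ℝ`: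
`([0,1], *, 1)` is a commutative monoid, `*` is continuous on `[0,1] × [0,1]`
and monotone in both arguments. -/
structure ContinuousTNorm where
  mul : ℝ → ℝ → ℝ
  mem_mul : ∀ a b, a ∈ Set.Icc (0:ℝ) 1 → b ∈ Set.Icc (0:ℝ) 1 →
    mul a b ∈ Set.Icc (0:ℝ) 1
  mul_comm : ∀ a b, a ∈ Set.Icc (0:ℝ) 1 → b ∈ Set.Icc (0:ℝ) 1 → mul a b = mul b a
  mul_assoc : ∀ a b c, a ∈ Set.Icc (0:ℝ) 1 → b ∈ Set.Icc (0:ℝ) 1 →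
    c ∈ Set.Icc (0:ℝ) 1 → mul (mul a b) c = mul a (mul b c)
  mul_one : ∀ a, a ∈ Set.Icc (0:ℝ) 1 → mul a 1 = a
  continuousOn : ContinuousOn (fun p : ℝ × ℝ => mul p.1 p.2)
    (Set.Icc (0:ℝ) 1 ×ˢ Set.Icc (0:ℝ) 1)
  mul_mono : ∀ a a' b b', a ∈ Set.Icc (0:ℝ) 1 → a' ∈ Set.Icc (0:ℝ) 1 →
    b ∈ Set.Icc (0:ℝ) 1 → b' ∈ Set.Icc (0:ℝ) 1 → a ≤ a' → b ≤ b' →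
    mul a b ≤ mul a' b'

/-- `(X, α, *)` is a probabilistic metric space: `α : X × X × [0,∞] → [0,1]`
satisfies (P1)–(P5), where left-continuity on `(0,∞)` is expressed via suprema. -/
structure IsProbMetric {X : Type*} (T : ContinuousTNorm)
    (α : X → X → ℝ≥0∞ → ℝ) : Prop where
  mem : ∀ x y γ, α x y γ ∈ Set.Icc (0:ℝ) 1
  mono : ∀ x y, Monotone (α x y)
  zero : ∀ x y, α x y 0 = 0
  top : ∀ x y, α x y ⊤ = 1
  left_cont : ∀ x y (γ : ℝ≥0∞), 0 < γ → γ ≠ ⊤ →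
    α x y γ = sSup (α x y '' Set.Iio γ)
  refl : ∀ x (γ : ℝ≥0∞), 0 < γ → α x x γ = 1
  symm : ∀ x y γ, α x y γ = α y x γ
  sep : ∀ x y, (∀ γ : ℝ≥0∞, 0 < γ → α x y γ = 1) → x = y
  triangle : ∀ x y z (r s : ℝ≥0∞), T.mul (α y z r) (α x y s) ≤ α x z (r + s)

/-- `φ_{λ,x}(y) = inf {γ ∈ [0,∞) | α(x,y,γ) > 1 - λ}`, with `inf ∅ = ∞`. -/
noncomputable def phi {X : Type*} (α : X → X → ℝ≥0∞ → ℝ) (l : ℝ) (x y : X) : ℝ≥0∞ :=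
  sInf {γ : ℝ≥0∞ | γ ≠ ⊤ ∧ 1 - l < α x y γ}

/-- If `ε, λ ∈ (0,1]` satisfy `(1-λ)*(1-λ) > 1-ε`, then
`φ_{ε,x}(z) ≤ φ_{λ,x}(y) + φ_{λ,y}(z)`. -/
theorem stmt2 {X : Type*} (T : ContinuousTNorm) (α : X → X → ℝ≥0∞ → ℝ)
    (hα : IsProbMetric T α) (ε l : ℝ) (hε0 : 0 < ε) (hε1 : ε ≤ 1)
    (hl0 : 0 < l) (hl1 : l ≤ 1) (h : 1 - ε < T.mul (1 - l) (1 - l))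
    (x y z : X) :
    phi α ε x z ≤ phi α l x y + phi α l y z := by
  have key : ∀ u ∈ {γ : ℝ≥0∞ | γ ≠ ⊤ ∧ 1 - l < α x y γ},
      ∀ v ∈ {γ : ℝ≥0∞ | γ ≠ ⊤ ∧ 1 - l < α y z γ},
      phi α ε x z ≤ u + v := by
    rintro u ⟨hu, hau⟩ v ⟨hv, hav⟩
    apply sInf_le
    refine ⟨ENNReal.add_ne_top.2 ⟨hu, hv⟩, ?_⟩
    have hm := hα.mem x y u
    have hm' := hα.mem y z v
    have h1 : T.mul (1-l) (1-l) ≤ T.mul (α y z v) (α x y u) :=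
      T.mul_mono _ _ _ _ ⟨by linarith, by linarith⟩ hm' ⟨by linarith, by linarith⟩ hm hav.le hau.le
    calc 1 - ε < T.mul (1-l) (1-l) := h
      _ ≤ T.mul (α y z v) (α x y u) := h1
      _ ≤ α x z (v + u) := hα.triangle x y z v u
      _ = α x z (u + v) := by rw [add_comm]
  rw [phi, phi, phi, ENNReal.sInf_add]
  refine le_iInf₂ fun u hu => ?_
  rw [add_comm u, ENNReal.sInf_add]
  exact le_iInf₂ fun v hv => by rw [add_comm]; exact key u hu v hv
end
end

section
/- Let (X,α,*) be a probabilistic metric space and define φ_{λ,x}(y) = inf{γ ∈ [0,∞) : α(x,y,γ) > 1−λ} (with inf ∅ = ∞). If ε,λ,λ' ∈ (0,1] satisfy (1−λ')*(1−λ) > 1−ε, then for all x,y,z ∈ X: φ_{ε,x}(z) ≤ φ_{λ,x}(y) + φ_{λ',y}(z), where addition is in [0,∞] (strong mixed triangle inequality, condition (LT)). -/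
open scoped ENNReal

noncomputable section

/-- LT: If `ε, λ, λ' ∈ (0,1]` satisfy `(1-λ')*(1-λ) > 1-ε`, then
`φ_{ε,x}(z) ≤ φ_{λ,x}(y) + φ_{λ',y}(z)`. -/
theorem stmt5 {X : Type*} (T : ContinuousTNorm) (α : X → X → ℝ≥0∞ → ℝ)
    (hα : IsProbMetric T α) (ε l l' : ℝ) (hε0 : 0 < ε) (hε1 : ε ≤ 1)
    (hl0 : 0 < l) (hl1 : l ≤ 1) (hl'0 : 0 < l') (hl'1 : l' ≤ 1)
    (h : 1 - ε < T.mul (1 - l') (1 - l)) (x y z : X) :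
    phi α ε x z ≤ phi α l x y + phi α l' y z := by
  rcases eq_or_ne (phi α l x y) ⊤ with hT | hT
  · simp [hT]
  rcases eq_or_ne (phi α l' y z) ⊤ with hT' | hT'
  · simp [hT']
  have key : ∀ γ ∈ {γ : ℝ≥0∞ | γ ≠ ⊤ ∧ 1 - l < α x y γ},
      ∀ δ ∈ {δ : ℝ≥0∞ | δ ≠ ⊤ ∧ 1 - l' < α y z δ}, phi α ε x z ≤ γ + δ := by
    rintro γ ⟨hγt, hγ⟩ δ ⟨hδt, hδ⟩
    apply sInf_le
    refine ⟨by simp [hγt, hδt], ?_⟩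
    calc 1 - ε < T.mul (1 - l') (1 - l) := h
      _ ≤ T.mul (α y z δ) (α x y γ) :=
        T.mul_mono _ _ _ _ ⟨by linarith, by linarith⟩ (hα.mem _ _ _)
          ⟨by linarith, by linarith⟩ (hα.mem _ _ _) hδ.le hγ.le
      _ ≤ α x z (δ + γ) := hα.triangle x y z δ γ
      _ = α x z (γ + δ) := by rw [add_comm]
  refine ENNReal.le_of_forall_pos_le_add fun η hη _ => ?_
  have hη2 : ((η : ℝ≥0∞) / 2) ≠ 0 := by
    simp [ENNReal.div_eq_zero_iff, ENNReal.coe_ne_zero.mpr hη.ne']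
  obtain ⟨γ, hγS, hγlt⟩ := sInf_lt_iff.mp
    (show sInf _ < phi α l x y + (η : ℝ≥0∞) / 2 from ENNReal.lt_add_right hT hη2)
  obtain ⟨δ, hδS, hδlt⟩ := sInf_lt_iff.mp
    (show sInf _ < phi α l' y z + (η : ℝ≥0∞) / 2 from ENNReal.lt_add_right hT' hη2)
  calc phi α ε x z ≤ γ + δ := key γ hγS δ hδS
    _ ≤ (phi α l x y + (η : ℝ≥0∞) / 2) + (phi α l' y z + (η : ℝ≥0∞) / 2) :=
        add_le_add hγlt.le hδlt.le
    _ = phi α l x y + phi α l' y z + η := by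
        rw [add_add_add_comm, ENNReal.add_halves]
end
end

section
/- Let X be a set and let φ_{λ,x} : X → [0,∞] be a family of functions indexed by λ ∈ (0,1] and x ∈ X satisfying the density condition (LD): for every λ ∈ (0,1] and all x,y, φ_{λ,x}(y) = inf{φ_{ρ,x}(y) : 0 < ρ < λ}. Define β : X × X × [0,∞] → [0,1] by β(x,y,∞)=1 and, for γ < ∞, β(x,y,γ) = sup{1−λ : λ ∈ (0,1], φ_{λ,x}(y) < γ} (with sup ∅ = 0). Then for all x,y ∈ X: β(x,y,0) = 0, β(x,y,·) is nondecreasing on [0,∞], and β(x,y,·) is left-continuous on (0,∞), i.e. β(x,y,γ) = sup{β(x,y,s) : s < γ} for every 0 < γ < ∞; in other words β(x,y,·) is a distance distribution. -/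
open scoped ENNReal

noncomputable section

/-- `β(x,y,γ) = sup {1 - λ | λ ∈ (0,1], φ_{λ,x}(y) < γ}` (intended for `γ < ∞`),
with `sup ∅ = 0` (the junk value of `Real.sSup`). -/
noncomputable def betaFin {X : Type*} (φ : ℝ → X → X → ℝ≥0∞) (x y : X) (γ : ℝ≥0∞) : ℝ :=
  sSup {t : ℝ | ∃ l : ℝ, 0 < l ∧ l ≤ 1 ∧ φ l x y < γ ∧ t = 1 - l}

/-- `β : X × X × [0,∞] → [0,1]` with `β(x,y,∞) = 1` and, for `γ < ∞`,
`β(x,y,γ) = sup {1 - λ | λ ∈ (0,1], φ_{λ,x}(y) < γ}` (with `sup ∅ = 0`). -/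
noncomputable def betaE {X : Type*} (φ : ℝ → X → X → ℝ≥0∞) (x y : X) (γ : ℝ≥0∞) : ℝ :=
  if γ = ⊤ then 1 else betaFin φ x y γ

lemma betaSet_le_one {X : Type*} (φ : ℝ → X → X → ℝ≥0∞) (x y : X) (γ : ℝ≥0∞) :
    ∀ t ∈ {t : ℝ | ∃ l : ℝ, 0 < l ∧ l ≤ 1 ∧ φ l x y < γ ∧ t = 1 - l}, t ≤ 1 := by
  rintro t ⟨l, hl0, hl1, _, rfl⟩
  linarith

lemma betaSet_bdd {X : Type*} (φ : ℝ → X → X → ℝ≥0∞) (x y : X) (γ : ℝ≥0∞) :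
    BddAbove {t : ℝ | ∃ l : ℝ, 0 < l ∧ l ≤ 1 ∧ φ l x y < γ ∧ t = 1 - l} :=
  ⟨1, betaSet_le_one φ x y γ⟩

lemma betaFin_nonneg {X : Type*} (φ : ℝ → X → X → ℝ≥0∞) (x y : X) (γ : ℝ≥0∞) :
    0 ≤ betaFin φ x y γ := by
  apply Real.sSup_nonneg
  rintro t ⟨l, hl0, hl1, _, rfl⟩
  linarith

lemma betaFin_le_one {X : Type*} (φ : ℝ → X → X → ℝ≥0∞) (x y : X) (γ : ℝ≥0∞) :
    betaFin φ x y γ ≤ 1 :=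
  Real.sSup_le (betaSet_le_one φ x y γ) zero_le_one

lemma betaFin_mono {X : Type*} (φ : ℝ → X → X → ℝ≥0∞) (x y : X) {γ γ' : ℝ≥0∞}
    (h : γ ≤ γ') : betaFin φ x y γ ≤ betaFin φ x y γ' := by
  apply Real.sSup_le _ (betaFin_nonneg φ x y γ')
  rintro t ⟨l, hl0, hl1, hlt, rfl⟩
  exact le_csSup (betaSet_bdd φ x y γ') ⟨l, hl0, hl1, lt_of_lt_of_le hlt h, rfl⟩

/-- If the family `φ` satisfies (LD), then for all `x, y` the map
`β(x,y,·)` is a distance distribution: `β(x,y,0) = 0`, `β(x,y,∞) = 1`,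
`β(x,y,·)` is nondecreasing on `[0,∞]` and left-continuous on `(0,∞)`. -/
theorem stmt9 {X : Type*} (φ : ℝ → X → X → ℝ≥0∞)
    (hLD : ∀ l : ℝ, 0 < l → l ≤ 1 → ∀ x y : X,
      φ l x y = sInf ((fun ρ => φ ρ x y) '' Set.Ioo (0:ℝ) l))
    (x y : X) :
    betaE φ x y 0 = 0 ∧ betaE φ x y ⊤ = 1 ∧ Monotone (betaE φ x y) ∧
    (∀ γ : ℝ≥0∞, 0 < γ → γ ≠ ⊤ →
      betaE φ x y γ = sSup (betaE φ x y '' Set.Iio γ)) := by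
  refine ⟨?_, ?_, ?_, ?_⟩
  · -- β(x,y,0) = 0
    have h0 : {t : ℝ | ∃ l : ℝ, 0 < l ∧ l ≤ 1 ∧ φ l x y < 0 ∧ t = 1 - l} = ∅ := by
      ext t
      simp only [Set.mem_setOf_eq, Set.mem_empty_iff_false, iff_false]
      rintro ⟨l, _, _, hlt, _⟩
      exact absurd hlt (by simp)
    simp [betaE, betaFin, h0, Real.sSup_empty]
  · simp [betaE]
  · -- monotone
    intro γ γ' h
    by_cases hγ' : γ' = ⊤
    · subst hγ'
      by_cases hγ : γ = ⊤
      · simp [betaE, hγ]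
      · simp only [betaE, hγ, if_neg, if_pos rfl]
        simpa [betaE, hγ] using betaFin_le_one φ x y γ
    · have hγ : γ ≠ ⊤ := fun h' => hγ' (top_le_iff.mp (h' ▸ h))
      simp only [betaE, if_neg hγ, if_neg hγ']
      exact betaFin_mono φ x y h
  · -- left continuity
    intro γ hγ0 hγtop
    have hne : (betaE φ x y '' Set.Iio γ).Nonempty := ⟨betaE φ x y 0, 0, hγ0, rfl⟩
    have hbdd : BddAbove (betaE φ x y '' Set.Iio γ) := by
      refine ⟨1, ?_⟩
      rintro _ ⟨s, hs, rfl⟩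
      have hs' : s ≠ ⊤ := (hs.trans_le le_top).ne
      simp only [betaE, if_neg hs']
      exact betaFin_le_one φ x y s
    have hnn : 0 ≤ sSup (betaE φ x y '' Set.Iio γ) := by
      apply Real.sSup_nonneg
      rintro _ ⟨s, hs, rfl⟩
      by_cases hs' : s = ⊤
      · simp [betaE, hs']
      · simpa [betaE, hs'] using betaFin_nonneg φ x y s
    rw [show betaE φ x y γ = betaFin φ x y γ from if_neg hγtop]
    apply le_antisymm
    · -- betaFin γ ≤ sup
      apply Real.sSup_le _ hnn
      rintro t ⟨l, hl0, hl1, hlt, rfl⟩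
      obtain ⟨s, hs1, hs2⟩ := exists_between hlt
      have hs' : s ≠ ⊤ := (hs2.trans_le le_top).ne
      have h1 : (1 - l) ≤ betaFin φ x y s :=
        le_csSup (betaSet_bdd φ x y s) ⟨l, hl0, hl1, hs1, rfl⟩
      have h2 : betaFin φ x y s ≤ sSup (betaE φ x y '' Set.Iio γ) := by
        have hmem : betaE φ x y s ∈ betaE φ x y '' Set.Iio γ := ⟨s, hs2, rfl⟩
        have := le_csSup hbdd hmem
        simpa [betaE, hs'] using this
      exact h1.trans h2
    · -- sup ≤ betaFin γ
      apply csSup_le hne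
      rintro _ ⟨s, hs, rfl⟩
      have hs' : s ≠ ⊤ := (hs.trans_le le_top).ne
      simp only [betaE, if_neg hs']
      exact betaFin_mono φ x y hs.le
end
end

section
/- Let * be a continuous t-norm on [0,1]. Let X be a set and let φ_{λ,x} : X → [0,∞] be a family of functions indexed by λ ∈ (0,1] and x ∈ X satisfying: (LD) for every λ ∈ (0,1] and all x,y, φ_{λ,x}(y) = inf{φ_{ρ,x}(y) : 0 < ρ < λ}; and (LT) for all ε,λ,λ' ∈ (0,1] with (1−λ')*(1−λ) > 1−ε and all x,y,z ∈ X, φ_{ε,x}(z) ≤ φ_{λ,x}(y) + φ_{λ',y}(z). Define β : X × X × [0,∞] → [0,1] by β(x,y,∞)=1 and, for γ < ∞, β(x,y,γ) = sup{1−λ : λ ∈ (0,1], φ_{λ,x}(y) < γ} (with sup ∅ = 0). Then for all x,y,z ∈ X and all γ,γ' ∈ [0,∞]: β(y,z,γ')*β(x,y,γ) ≤ β(x,z,γ+γ'). -/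
open scoped ENNReal

noncomputable section

lemma betaSet_subset {X : Type*} (φ : ℝ → X → X → ℝ≥0∞) (x y : X) (γ : ℝ≥0∞) :
    {t : ℝ | ∃ l : ℝ, 0 < l ∧ l ≤ 1 ∧ φ l x y < γ ∧ t = 1 - l} ⊆ Set.Ico (0:ℝ) 1 := by
  rintro t ⟨l, hl0, hl1, _, rfl⟩
  exact ⟨by linarith, by linarith⟩

lemma betaFin_mem {X : Type*} (φ : ℝ → X → X → ℝ≥0∞) (x y : X) (γ : ℝ≥0∞) :
    betaFin φ x y γ ∈ Set.Icc (0:ℝ) 1 := by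
  constructor
  · exact Real.sSup_nonneg (fun t ht => (betaSet_subset φ x y γ ht).1)
  · exact Real.sSup_le (fun t ht => le_of_lt (betaSet_subset φ x y γ ht).2) zero_le_one

lemma betaE_mem {X : Type*} (φ : ℝ → X → X → ℝ≥0∞) (x y : X) (γ : ℝ≥0∞) :
    betaE φ x y γ ∈ Set.Icc (0:ℝ) 1 := by
  unfold betaE
  split
  · exact ⟨zero_le_one, le_refl 1⟩
  · exact betaFin_mem φ x y γ

lemma tnorm_zero (T : ContinuousTNorm) (c : ℝ) (hc : c ∈ Set.Icc (0:ℝ) 1) :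
    T.mul c 0 = 0 := by
  have h01 : (0:ℝ) ∈ Set.Icc (0:ℝ) 1 := ⟨le_refl 0, zero_le_one⟩
  have h11 : (1:ℝ) ∈ Set.Icc (0:ℝ) 1 := ⟨zero_le_one, le_refl 1⟩
  have h1 : T.mul c 0 ≤ T.mul 1 0 :=
    T.mul_mono c 1 0 0 hc h11 h01 h01 hc.2 (le_refl 0)
  have h2 : T.mul 1 0 = 0 := by rw [T.mul_comm 1 0 h11 h01, T.mul_one 0 h01]
  have h3 := (T.mem_mul c 0 hc h01).1
  linarith

/-- If the family `φ` satisfies (LD) and (LT) for a continuous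
t-norm `*`, then for all `x, y, z` and all `γ, γ' ∈ [0,∞]`:
`β(y,z,γ') * β(x,y,γ) ≤ β(x,z,γ+γ')`. -/
theorem stmt10 {X : Type*} (T : ContinuousTNorm) (φ : ℝ → X → X → ℝ≥0∞)
    (hLD : ∀ l : ℝ, 0 < l → l ≤ 1 → ∀ x y : X,
      φ l x y = sInf ((fun ρ => φ ρ x y) '' Set.Ioo (0:ℝ) l))
    (hLT : ∀ ε l l' : ℝ, 0 < ε → ε ≤ 1 → 0 < l → l ≤ 1 → 0 < l' → l' ≤ 1 →
      1 - ε < T.mul (1 - l') (1 - l) →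
      ∀ x y z : X, φ ε x z ≤ φ l x y + φ l' y z)
    (x y z : X) (γ γ' : ℝ≥0∞) :
    T.mul (betaE φ y z γ') (betaE φ x y γ) ≤ betaE φ x z (γ + γ') := by
  clear hLD
  have hbmem := betaE_mem φ x y γ
  have hbmem' := betaE_mem φ y z γ'
  rcases eq_or_ne γ ⊤ with hγ | hγ
  · have h1 : betaE φ x z (γ + γ') = 1 := by
      rw [betaE, if_pos (by simp [hγ] : γ + γ' = ⊤)]
    rw [h1]
    exact (T.mem_mul _ _ hbmem' hbmem).2
  rcases eq_or_ne γ' ⊤ with hγ' | hγ'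
  · have h1 : betaE φ x z (γ + γ') = 1 := by
      rw [betaE, if_pos (by simp [hγ'] : γ + γ' = ⊤)]
    rw [h1]
    exact (T.mem_mul _ _ hbmem' hbmem).2
  have hsum : γ + γ' ≠ ⊤ := ENNReal.add_ne_top.2 ⟨hγ, hγ'⟩
  simp only [betaE, if_neg hγ, if_neg hγ', if_neg hsum] at hbmem hbmem' ⊢
  set SA := {t : ℝ | ∃ l : ℝ, 0 < l ∧ l ≤ 1 ∧ φ l x y < γ ∧ t = 1 - l} with hSA
  set SB := {t : ℝ | ∃ l : ℝ, 0 < l ∧ l ≤ 1 ∧ φ l y z < γ' ∧ t = 1 - l} with hSB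
  set SC := {t : ℝ | ∃ l : ℝ, 0 < l ∧ l ≤ 1 ∧ φ l x z < γ + γ' ∧ t = 1 - l} with hSC
  have hCnonneg : 0 ≤ betaFin φ x z (γ + γ') := (betaFin_mem φ x z (γ + γ')).1
  -- key pointwise inequality
  have key : ∀ la ∈ SA, ∀ lb ∈ SB, T.mul lb la ≤ betaFin φ x z (γ + γ') := by
    rintro ta ⟨la, hla0, hla1, hφa, rfl⟩ tb ⟨lb, hlb0, hlb1, hφb, rfl⟩
    set m := T.mul (1 - lb) (1 - la) with hm
    have hmmem : m ∈ Set.Icc (0:ℝ) 1 :=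
      T.mem_mul _ _ ⟨by linarith, by linarith⟩ ⟨by linarith, by linarith⟩
    by_contra hcon
    push_neg at hcon
    obtain ⟨c, hc1, hc2⟩ := exists_between hcon
    have hc0 : 0 ≤ c := le_of_lt (lt_of_le_of_lt hCnonneg hc1)
    have hcm1 : c < 1 := lt_of_lt_of_le hc2 hmmem.2
    have hε0 : 0 < 1 - c := by linarith
    have hε1 : 1 - c ≤ 1 := by linarith
    have hφ : φ (1 - c) x z ≤ φ la x y + φ lb y z := by
      apply hLT (1 - c) la lb hε0 hε1 hla0 hla1 hlb0 hlb1 _ x y z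
      rw [show (1 : ℝ) - (1 - c) = c by ring]
      exact hc2
    have hlt : φ (1 - c) x z < γ + γ' :=
      lt_of_le_of_lt hφ (ENNReal.add_lt_add hφa hφb)
    have hcmem : c ∈ SC := ⟨1 - c, hε0, hε1, hlt, by ring⟩
    have : c ≤ betaFin φ x z (γ + γ') := le_csSup (betaSet_bdd φ x z (γ + γ')) hcmem
    linarith
  -- degenerate cases: empty sets
  rcases Set.eq_empty_or_nonempty SA with hA | hA
  · have : betaFin φ x y γ = 0 := by
      rw [betaFin]; rw [← hSA, hA]; exact Real.sSup_empty
    rw [this, tnorm_zero T _ hbmem']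
    exact hCnonneg
  rcases Set.eq_empty_or_nonempty SB with hB | hB
  · have : betaFin φ y z γ' = 0 := by
      rw [betaFin]; rw [← hSB, hB]; exact Real.sSup_empty
    rw [this, T.mul_comm _ _ ⟨le_refl 0, zero_le_one⟩ hbmem, tnorm_zero T _ hbmem]
    exact hCnonneg
  -- main case: approximate sups by sequences
  obtain ⟨u, -, hu, humem⟩ := exists_seq_tendsto_sSup hA (betaSet_bdd φ x y γ)
  obtain ⟨v, -, hv, hvmem⟩ := exists_seq_tendsto_sSup hB (betaSet_bdd φ y z γ')
  have ha : betaFin φ x y γ = sSup SA := rfl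
  have hb : betaFin φ y z γ' = sSup SB := rfl
  rw [ha, hb] at *
  have hsq : ∀ n, (v n, u n) ∈ Set.Icc (0:ℝ) 1 ×ˢ Set.Icc (0:ℝ) 1 := fun n =>
    ⟨Set.Ico_subset_Icc_self (betaSet_subset φ y z γ' (hvmem n)),
     Set.Ico_subset_Icc_self (betaSet_subset φ x y γ (humem n))⟩
  have hmem : (sSup SB, sSup SA) ∈ Set.Icc (0:ℝ) 1 ×ˢ Set.Icc (0:ℝ) 1 := ⟨hbmem', hbmem⟩
  have hcont := (T.continuousOn (sSup SB, sSup SA) hmem).tendsto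
  have hseq : Filter.Tendsto (fun n => (v n, u n)) Filter.atTop
      (nhdsWithin (sSup SB, sSup SA) (Set.Icc (0:ℝ) 1 ×ˢ Set.Icc (0:ℝ) 1)) := by
    rw [tendsto_nhdsWithin_iff]
    exact ⟨hv.prodMk_nhds hu, Filter.Eventually.of_forall hsq⟩
  exact le_of_tendsto (hcont.comp hseq)
    (Filter.Eventually.of_forall fun n => key (u n) (humem n) (v n) (hvmem n))
end
end

section
/- Let X be a set and let φ_{λ,x} : X → [0,∞] be a family of functions indexed by λ ∈ (0,1] and x ∈ X satisfying: (LD) for every λ ∈ (0,1] and all x,y, φ_{λ,x}(y) = inf{φ_{ρ,x}(y) : 0 < ρ < λ}; and (LH) if x ≠ y then there exists λ ∈ (0,1] with φ_{λ,x}(y) > 0. Define β(x,y,γ) = sup{1−λ : λ ∈ (0,1], φ_{λ,x}(y) < γ} for γ < ∞ (with sup ∅ = 0). Then for all x,y ∈ X: if β(x,y,γ) = 1 for all γ ∈ (0,∞), then x = y. -/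
open scoped ENNReal

noncomputable section

/-- If the family `φ` satisfies (LD) and (LH), then for all
`x, y`: if `β(x,y,γ) = 1` for all `γ ∈ (0,∞)`, then `x = y`. -/
theorem stmt11 {X : Type*} (φ : ℝ → X → X → ℝ≥0∞)
    (hLD : ∀ l : ℝ, 0 < l → l ≤ 1 → ∀ x y : X,
      φ l x y = sInf ((fun ρ => φ ρ x y) '' Set.Ioo (0:ℝ) l))
    (hLH : ∀ x y : X, x ≠ y → ∃ l : ℝ, 0 < l ∧ l ≤ 1 ∧ 0 < φ l x y)
    (x y : X) (h : ∀ γ : ℝ≥0∞, 0 < γ → γ ≠ ⊤ → betaFin φ x y γ = 1) :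
    x = y := by
  by_contra hxy
  obtain ⟨l₀, hl₀, hl₀1, hpos⟩ := hLH x y hxy
  set γ : ℝ≥0∞ := min (φ l₀ x y) 1 with hγ
  have hγpos : 0 < γ := lt_min hpos one_pos
  have hγtop : γ ≠ ⊤ := ne_top_of_le_ne_top ENNReal.one_ne_top (min_le_right _ _)
  have hβ := h γ hγpos hγtop
  -- any λ with φ l x y < γ satisfies l ≥ l₀
  have key : ∀ l : ℝ, 0 < l → φ l x y < γ → l₀ ≤ l := by
    intro l hl hlt
    by_contra hlt'
    push_neg at hlt'
    have : φ l₀ x y ≤ φ l x y := by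
      rw [hLD l₀ hl₀ hl₀1 x y]
      exact sInf_le ⟨l, ⟨hl, hlt'⟩, rfl⟩
    exact absurd hlt (not_lt.mpr (le_trans (le_trans (min_le_left _ _) this) le_rfl))
  have hub : betaFin φ x y γ ≤ 1 - l₀ := by
    apply Real.sSup_le
    · rintro t ⟨l, hl, hl1, hlt, rfl⟩
      linarith [key l hl hlt]
    · linarith
  rw [hβ] at hub
  linarith
end
end

section
/- Let X be a set and let φ_{λ,x} : X → [0,∞] be a family of functions indexed by λ ∈ (0,1] and x ∈ X satisfying the density condition (LD): for every λ ∈ (0,1] and all x,y, φ_{λ,x}(y) = inf{φ_{ρ,x}(y) : 0 < ρ < λ}. Define β(x,y,γ) = sup{1−λ : λ ∈ (0,1], φ_{λ,x}(y) < γ} for γ < ∞ (with sup ∅ = 0), and define ψ_{λ,x}(y) = inf{γ ∈ [0,∞) : β(x,y,γ) > 1−λ} (with inf ∅ = ∞). Then ψ_{λ,x}(y) = φ_{λ,x}(y) for all λ ∈ (0,1] and all x,y ∈ X. -/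
open scoped ENNReal

noncomputable section

/-- If the family `φ` satisfies (LD) and
`ψ_{λ,x}(y) = inf {γ ∈ [0,∞) | β(x,y,γ) > 1-λ}` (with `inf ∅ = ∞`), then
`ψ_{λ,x}(y) = φ_{λ,x}(y)` for all `λ ∈ (0,1]` and all `x, y`. -/
theorem stmt12 {X : Type*} (φ : ℝ → X → X → ℝ≥0∞)
    (hLD : ∀ l : ℝ, 0 < l → l ≤ 1 → ∀ x y : X,
      φ l x y = sInf ((fun ρ => φ ρ x y) '' Set.Ioo (0:ℝ) l))
    (l : ℝ) (hl0 : 0 < l) (hl1 : l ≤ 1) (x y : X) :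
    sInf {γ : ℝ≥0∞ | γ ≠ ⊤ ∧ 1 - l < betaFin φ x y γ} = φ l x y := by
  set m := φ l x y with hm
  have hkey : ∀ γ : ℝ≥0∞, (1 - l < betaFin φ x y γ ↔ m < γ) := by
    intro γ
    have hbdd : BddAbove {t : ℝ | ∃ l' : ℝ, 0 < l' ∧ l' ≤ 1 ∧ φ l' x y < γ ∧ t = 1 - l'} := by
      refine ⟨1, ?_⟩
      rintro t ⟨l', hl'0, _, _, rfl⟩
      linarith
    constructor
    · intro h
      have hne : {t : ℝ | ∃ l' : ℝ, 0 < l' ∧ l' ≤ 1 ∧ φ l' x y < γ ∧ t = 1 - l'}.Nonempty := by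
        by_contra hne
        rw [Set.not_nonempty_iff_eq_empty] at hne
        rw [betaFin, hne, Real.sSup_empty] at h
        linarith
      obtain ⟨t, ⟨ρ, hρ0, hρ1, hφ, rfl⟩, ht⟩ := exists_lt_of_lt_csSup hne h
      have hρl : ρ < l := by linarith
      rw [hm, hLD l hl0 hl1 x y]
      exact lt_of_le_of_lt (sInf_le ⟨ρ, ⟨hρ0, hρl⟩, rfl⟩) hφ
    · intro h
      rw [hm, hLD l hl0 hl1 x y, sInf_lt_iff] at h
      obtain ⟨a, ⟨ρ, ⟨hρ0, hρl⟩, rfl⟩, hφ⟩ := h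
      have hmem : (1 - ρ) ∈ {t : ℝ | ∃ l' : ℝ, 0 < l' ∧ l' ≤ 1 ∧ φ l' x y < γ ∧ t = 1 - l'} :=
        ⟨ρ, hρ0, by linarith, hφ, rfl⟩
      calc 1 - l < 1 - ρ := by linarith
        _ ≤ _ := le_csSup hbdd hmem
  have hS : {γ : ℝ≥0∞ | γ ≠ ⊤ ∧ 1 - l < betaFin φ x y γ} = {γ : ℝ≥0∞ | γ ≠ ⊤ ∧ m < γ} := by
    ext γ
    exact and_congr_right fun _ => hkey γ
  rw [hS]
  by_cases hmt : m = ⊤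
  · have : {γ : ℝ≥0∞ | γ ≠ ⊤ ∧ m < γ} = ∅ := by
      ext γ
      simp only [Set.mem_setOf_eq, Set.mem_empty_iff_false, iff_false, not_and]
      intro hγ hlt
      exact hγ (top_le_iff.mp (hmt ▸ hlt.le))
    rw [this, sInf_empty, hmt]
  · apply le_antisymm
    · refine ENNReal.le_of_forall_pos_le_add ?_
      intro ε hε _
      refine sInf_le ⟨?_, ?_⟩
      · simp [ENNReal.add_ne_top, hmt]
      · exact ENNReal.lt_add_right hmt (by exact_mod_cast hε.ne')
    · exact le_sInf fun γ hγ => hγ.2.le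
end
end

section
/- Let (X,α,*) be a probabilistic metric space and define d_λ(x,y) = inf{γ ∈ [0,∞) : α(x,y,γ) > 1−λ} (with inf ∅ = ∞) for λ ∈ (0,1]. Define β : X × X × [0,∞] → [0,1] by β(x,y,∞)=1 and, for γ < ∞, β(x,y,γ) = sup{1−λ : λ ∈ (0,1], d_λ(x,y) < γ} (with sup ∅ = 0). Then β = α, i.e. β(x,y,γ) = α(x,y,γ) for all x,y ∈ X and all γ ∈ [0,∞]. -/
open scoped ENNReal

noncomputable section

/-- Reconstructing `β` from the distances `d_λ = φ_{λ,·}(·)`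
associated with a probabilistic metric space `(X, α, *)` gives back `α`. -/
theorem stmt14 {X : Type*} (T : ContinuousTNorm) (α : X → X → ℝ≥0∞ → ℝ)
    (hα : IsProbMetric T α) (x y : X) (γ : ℝ≥0∞) :
    betaE (phi α) x y γ = α x y γ := by
  rcases eq_or_ne γ ⊤ with h | h
  · simp [betaE, h, hα.top]
  · simp only [betaE, if_neg h, betaFin]
    set S := {t : ℝ | ∃ l : ℝ, 0 < l ∧ l ≤ 1 ∧ phi α l x y < γ ∧ t = 1 - l} with hS
    rcases eq_or_ne γ 0 with h0 | h0
    · have hE : S = ∅ := by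
        ext t
        simp only [hS, Set.mem_setOf_eq, Set.mem_empty_iff_false, iff_false]
        rintro ⟨l, _, _, hφ, rfl⟩
        exact absurd hφ (by simp [h0])
      rw [hE, Real.sSup_empty, h0, hα.zero]
    · have hγpos : 0 < γ := h0.bot_lt
      have hub : ∀ t ∈ S, t ≤ α x y γ := by
        rintro t ⟨l, hl0, hl1, hφ, rfl⟩
        obtain ⟨γ', hγ'mem, hγ'lt⟩ := sInf_lt_iff.mp hφ
        exact le_trans (le_of_lt hγ'mem.2) (hα.mono x y hγ'lt.le)
      rcases le_or_gt (α x y γ) 0 with hz | hpos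
      · have hz' : α x y γ = 0 := le_antisymm hz (hα.mem x y γ).1
        have hE : S = ∅ := by
          ext t
          simp only [hS, Set.mem_setOf_eq, Set.mem_empty_iff_false, iff_false]
          rintro ⟨l, hl0, hl1, hφ, rfl⟩
          obtain ⟨γ', ⟨_, hαγ'⟩, hγ'lt⟩ := sInf_lt_iff.mp hφ
          have hle : α x y γ' ≤ α x y γ := hα.mono x y hγ'lt.le
          linarith
        rw [hE, Real.sSup_empty, hz']
      · have hmemv : ∀ v : ℝ, 0 ≤ v → v < α x y γ → v ∈ S := by
          intro v hv0 hvlt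
          have hlc := hα.left_cont x y γ hγpos h
          rw [hlc] at hvlt
          obtain ⟨w, ⟨γ', hγ', rfl⟩, hw⟩ :=
            exists_lt_of_lt_csSup (Set.Nonempty.image _ ⟨0, Set.mem_Iio.mpr hγpos⟩) hvlt
          refine ⟨1 - v, by linarith [(hα.mem x y γ).2], by linarith, ?_, by ring⟩
          calc phi α (1 - v) x y ≤ γ' :=
                sInf_le ⟨(hγ'.trans h.lt_top).ne, by linarith⟩
            _ < γ := hγ'
        have hne : S.Nonempty := ⟨0, hmemv 0 le_rfl hpos⟩
        have hbdd : BddAbove S := ⟨α x y γ, hub⟩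
        refine le_antisymm (csSup_le hne hub) ?_
        by_contra hlt
        push_neg at hlt
        have h0le : (0:ℝ) ≤ sSup S := le_csSup hbdd (hmemv 0 le_rfl hpos)
        set v := (sSup S + α x y γ) / 2 with hv
        have hv0 : 0 ≤ v := by positivity
        have hvlt : v < α x y γ := by simp only [hv]; linarith
        have : v ≤ sSup S := le_csSup hbdd (hmemv v hv0 hvlt)
        simp only [hv] at this; linarith
end
end

section
/- Let (X,α,*) and (Y,α',*') be probabilistic metric spaces, and define d_λ(x,x') = inf{γ ∈ [0,∞) : α(x,x',γ) > 1−λ} and d'_λ(y,y') = inf{γ ∈ [0,∞) : α'(y,y',γ) > 1−λ} (with inf ∅ = ∞) for λ ∈ (0,1]. Then a map f : X → Y is non-expansive, i.e. α(x,x',t) ≤ α'(f(x),f(x'),t) for all x,x' ∈ X and t ∈ [0,∞], if and only if for every λ ∈ (0,1] and all x,x' ∈ X: d'_λ(f(x),f(x')) ≤ d_λ(x,x'). -/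
open scoped ENNReal

noncomputable section

/-- A map `f : X → Y` between probabilistic metric spaces is
non-expansive iff it is levelwise non-expansive for the associated distances. -/
theorem stmt15 {X Y : Type*} (T T' : ContinuousTNorm)
    (α : X → X → ℝ≥0∞ → ℝ) (α' : Y → Y → ℝ≥0∞ → ℝ)
    (hα : IsProbMetric T α) (hα' : IsProbMetric T' α') (f : X → Y) :
    (∀ (x x' : X) (t : ℝ≥0∞), α x x' t ≤ α' (f x) (f x') t) ↔
    (∀ l : ℝ, 0 < l → l ≤ 1 → ∀ x x' : X,
      phi α' l (f x) (f x') ≤ phi α l x x') := by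
  constructor
  · intro h l _ _ x x'
    apply sInf_le_sInf
    intro γ hγ
    exact ⟨hγ.1, lt_of_lt_of_le hγ.2 (h x x' γ)⟩
  · intro h x x' t
    by_contra hc
    push_neg at hc
    have ht0 : t ≠ 0 := by
      intro h0
      rw [h0, hα.zero] at hc
      exact absurd hc (not_lt.2 (hα'.mem (f x) (f x') 0).1)
    have httop : t ≠ ⊤ := by
      intro h0
      rw [h0, hα'.top] at hc
      exact absurd hc (not_lt.2 (hα.mem x x' ⊤).2)
    have htpos : 0 < t := pos_iff_ne_zero.mpr ht0
    have hb0 : (0:ℝ) ≤ α' (f x) (f x') t := (hα'.mem (f x) (f x') t).1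
    have ha1 : α x x' t ≤ 1 := (hα.mem x x' t).2
    set l : ℝ := 1 - (α x x' t + α' (f x) (f x') t) / 2 with hl
    have hl0 : 0 < l := by rw [hl]; linarith
    have hl1 : l ≤ 1 := by rw [hl]; linarith
    have hmid1 : α' (f x) (f x') t < 1 - l := by rw [hl]; linarith
    have hmid2 : 1 - l < α x x' t := by rw [hl]; linarith
    have hlc := hα.left_cont x x' t htpos httop
    rw [hlc] at hmid2
    have hne : (α x x' '' Set.Iio t).Nonempty := ⟨α x x' 0, 0, htpos, rfl⟩
    obtain ⟨y, hy, hya⟩ := exists_lt_of_lt_csSup hne hmid2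
    obtain ⟨γ, hγt, rfl⟩ := hy
    have hγtop : γ ≠ ⊤ := (hγt.trans_le le_top).ne
    have h1 : phi α l x x' ≤ γ := sInf_le ⟨hγtop, hya⟩
    have h2 : phi α' l (f x) (f x') < t :=
      lt_of_le_of_lt (le_trans (h l hl0 hl1 x x') h1) hγt
    rw [phi, sInf_lt_iff] at h2
    obtain ⟨s, ⟨hstop, hs⟩, hst⟩ := h2
    have hmono : α' (f x) (f x') s ≤ α' (f x) (f x') t := hα'.mono (f x) (f x') hst.le
    linarith
end
end

section
/- Let X and Y be sets, let d_λ : X × X → [0,∞] and d'_λ : Y × Y → [0,∞] be families of distances indexed by λ ∈ (0,1], each satisfying the density condition (UD): d_λ(x,y) = inf{d_ρ(x,y) : 0 < ρ < λ} for all λ and all points (and likewise for d'). Define β : X × X × [0,∞] → [0,1] by β(x,y,∞)=1 and, for γ < ∞, β(x,y,γ) = sup{1−λ : λ ∈ (0,1], d_λ(x,y) < γ} (sup ∅ = 0), and define β' on Y analogously from the d'_λ. Then a map f : X → Y satisfies d'_λ(f(x),f(x')) ≤ d_λ(x,x') for all λ ∈ (0,1] and all x,x' ∈ X (levelwise non-expansive)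 if and only if β(x,x',γ) ≤ β'(f(x),f(x'),γ) for all x,x' ∈ X and all γ ∈ [0,∞]. -/
open scoped ENNReal

noncomputable section

/-- For families of distances `d`, `d'` satisfying (UD), a map
`f : X → Y` is levelwise non-expansive iff `β(x,x',γ) ≤ β'(f x, f x', γ)` for
all `x, x'` and all `γ ∈ [0,∞]`. -/
theorem stmt16 {X Y : Type*} (d : ℝ → X → X → ℝ≥0∞) (d' : ℝ → Y → Y → ℝ≥0∞)
    (hd0 : ∀ l : ℝ, 0 < l → l ≤ 1 → ∀ x : X, d l x x = 0)
    (hd'0 : ∀ l : ℝ, 0 < l → l ≤ 1 → ∀ y : Y, d' l y y = 0)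
    (hUD : ∀ l : ℝ, 0 < l → l ≤ 1 → ∀ x x' : X,
      d l x x' = sInf ((fun ρ => d ρ x x') '' Set.Ioo (0:ℝ) l))
    (hUD' : ∀ l : ℝ, 0 < l → l ≤ 1 → ∀ y y' : Y,
      d' l y y' = sInf ((fun ρ => d' ρ y y') '' Set.Ioo (0:ℝ) l))
    (f : X → Y) :
    (∀ l : ℝ, 0 < l → l ≤ 1 → ∀ x x' : X, d' l (f x) (f x') ≤ d l x x') ↔
    (∀ (x x' : X) (γ : ℝ≥0∞), betaE d x x' γ ≤ betaE d' (f x) (f x') γ) := by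
  constructor
  · intro h x x' γ
    unfold betaE
    split
    · exact le_refl 1
    · unfold betaFin
      have hsub : {t : ℝ | ∃ l : ℝ, 0 < l ∧ l ≤ 1 ∧ d l x x' < γ ∧ t = 1 - l} ⊆
          {t : ℝ | ∃ l : ℝ, 0 < l ∧ l ≤ 1 ∧ d' l (f x) (f x') < γ ∧ t = 1 - l} := by
        rintro t ⟨l, hl0, hl1, hlt, rfl⟩
        exact ⟨l, hl0, hl1, lt_of_le_of_lt (h l hl0 hl1 x x') hlt, rfl⟩
      have hbdd : BddAbove {t : ℝ | ∃ l : ℝ, 0 < l ∧ l ≤ 1 ∧ d' l (f x) (f x') < γ ∧ t = 1 - l} :=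
        ⟨1, by rintro t ⟨l, hl0, hl1, _, rfl⟩; linarith⟩
      rcases Set.eq_empty_or_nonempty
          {t : ℝ | ∃ l : ℝ, 0 < l ∧ l ≤ 1 ∧ d l x x' < γ ∧ t = 1 - l} with hS | hS
      · rw [hS, Real.sSup_empty]
        exact Real.sSup_nonneg (by rintro t ⟨l, hl0, hl1, _, rfl⟩; linarith)
      · exact csSup_le_csSup hbdd hS hsub
  · intro h l hl0 hl1 x x'
    by_contra hc
    push_neg at hc
    obtain ⟨γ, hγ1, hγ2⟩ := exists_between hc
    have hγtop : γ ≠ ⊤ := (hγ2.trans_le le_top).ne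
    have h1 : sInf ((fun ρ => d ρ x x') '' Set.Ioo (0:ℝ) l) < γ := by
      rw [← hUD l hl0 hl1]; exact hγ1
    obtain ⟨v, ⟨ρ, hρ, rfl⟩, hv⟩ := sInf_lt_iff.mp h1
    have hρ0 := hρ.1
    have hρl := hρ.2
    have hρ1 : ρ ≤ 1 := le_trans hρl.le hl1
    have hmem : (1 - ρ) ∈ {t : ℝ | ∃ m : ℝ, 0 < m ∧ m ≤ 1 ∧ d m x x' < γ ∧ t = 1 - m} :=
      ⟨ρ, hρ0, hρ1, hv, rfl⟩
    have hbddS : BddAbove {t : ℝ | ∃ m : ℝ, 0 < m ∧ m ≤ 1 ∧ d m x x' < γ ∧ t = 1 - m} :=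
      ⟨1, by rintro t ⟨m, hm0, hm1, _, rfl⟩; linarith⟩
    have hβ : 1 - ρ ≤ betaFin d x x' γ := le_csSup hbddS hmem
    have hE : betaE d x x' γ ≤ betaE d' (f x) (f x') γ := h x x' γ
    rw [betaE, betaE, if_neg hγtop, if_neg hγtop] at hE
    have h2 : (1 : ℝ) - l <
        sSup {t : ℝ | ∃ m : ℝ, 0 < m ∧ m ≤ 1 ∧ d' m (f x) (f x') < γ ∧ t = 1 - m} := by
      have hlρ : (1:ℝ) - l < 1 - ρ := by linarith
      have := hβ.trans hE
      unfold betaFin at this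
      linarith
    have hne : {t : ℝ | ∃ m : ℝ, 0 < m ∧ m ≤ 1 ∧ d' m (f x) (f x') < γ ∧ t = 1 - m}.Nonempty := by
      by_contra hne
      rw [Set.not_nonempty_iff_eq_empty] at hne
      rw [hne, Real.sSup_empty] at h2
      linarith
    obtain ⟨t, ht, hlt⟩ := exists_lt_of_lt_csSup hne h2
    obtain ⟨m, hm0, hm1, hdm, rfl⟩ := ht
    have hml : m < l := by linarith
    have hle : d' l (f x) (f x') ≤ d' m (f x) (f x') := by
      rw [hUD' l hl0 hl1]
      exact sInf_le ⟨m, ⟨hm0, hml⟩, rfl⟩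
    exact absurd (lt_of_le_of_lt hle hdm) (not_lt.mpr hγ2.le)
end
end
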